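/- Let E be a finite set and a, b : E → ℝ with a(e) > 0 and b(e) > 0 for all e ∈ E. Suppose there exists some e ∈ E with a(e) < b(e) and some e ∈ E with a(e) > b(e). Then ∏_{e∈E} min(a(e), b(e)) + ∏_{e∈E} max(a(e), b(e)) > ∏_{e∈E} a(e) + ∏_{e∈E} b(e). -/
import Mathlib


/-- If `a, b > 0` on `E`, some `e ∈ E` has `a e < b e` and some `e ∈ E` has
`a e > b e`, then
`∏ min(a,b) + ∏ max(a,b) > ∏ a + ∏ b`. -/
theorem min_max_prod_gt
    {ι : Type*} (E : Finset ι) (a b : ι → ℝ)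
    (ha : ∀ e ∈ E, 0 < a e) (hb : ∀ e ∈ E, 0 < b e)
    (h₁ : ∃ e ∈ E, a e < b e) (h₂ : ∃ e ∈ E, b e < a e) :
    ∏ e ∈ E, min (a e) (b e) + ∏ e ∈ E, max (a e) (b e)
      > ∏ e ∈ E, a e + ∏ e ∈ E, b e := by
  classical
  set S := E.filter (fun e => a e ≤ b e) with hSdef
  set T := E.filter (fun e => ¬ a e ≤ b e) with hTdef
  have hsplit : ∀ f : ι → ℝ,
      ∏ e ∈ E, f e = (∏ e ∈ S, f e) * ∏ e ∈ T, f e := fun f =>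
    (Finset.prod_filter_mul_prod_filter_not E _ f).symm
  have hminS : ∏ e ∈ S, min (a e) (b e) = ∏ e ∈ S, a e :=
    Finset.prod_congr rfl fun e he => min_eq_left (Finset.mem_filter.1 he).2
  have hmaxS : ∏ e ∈ S, max (a e) (b e) = ∏ e ∈ S, b e :=
    Finset.prod_congr rfl fun e he => max_eq_right (Finset.mem_filter.1 he).2
  have hminT : ∏ e ∈ T, min (a e) (b e) = ∏ e ∈ T, b e :=
    Finset.prod_congr rfl fun e he =>
      min_eq_right (le_of_lt (lt_of_not_ge (Finset.mem_filter.1 he).2))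
  have hmaxT : ∏ e ∈ T, max (a e) (b e) = ∏ e ∈ T, a e :=
    Finset.prod_congr rfl fun e he =>
      max_eq_left (le_of_lt (lt_of_not_ge (Finset.mem_filter.1 he).2))
  rw [hsplit (fun e => min (a e) (b e)), hsplit (fun e => max (a e) (b e)),
    hsplit a, hsplit b, hminS, hmaxS, hminT, hmaxT]
  have hA1 : 0 < ∏ e ∈ S, a e :=
    Finset.prod_pos fun e he => ha e (Finset.mem_filter.1 he).1
  have hB2 : 0 < ∏ e ∈ T, b e :=
    Finset.prod_pos fun e he => hb e (Finset.mem_filter.1 he).1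
  have h1 : ∏ e ∈ S, a e < ∏ e ∈ S, b e := by
    apply Finset.prod_lt_prod
    · exact fun e he => ha e (Finset.mem_filter.1 he).1
    · exact fun e he => (Finset.mem_filter.1 he).2
    · obtain ⟨e, he, hlt⟩ := h₁
      exact ⟨e, Finset.mem_filter.2 ⟨he, le_of_lt hlt⟩, hlt⟩
  have h2 : ∏ e ∈ T, b e < ∏ e ∈ T, a e := by
    apply Finset.prod_lt_prod
    · exact fun e he => hb e (Finset.mem_filter.1 he).1
    · exact fun e he => le_of_lt (lt_of_not_ge (Finset.mem_filter.1 he).2)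
    · obtain ⟨e, he, hlt⟩ := h₂
      exact ⟨e, Finset.mem_filter.2 ⟨he, not_le.2 hlt⟩, hlt⟩
  nlinarith [mul_pos (sub_pos.2 h1) (sub_pos.2 h2)]
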